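/- Let X be a Hausdorff locally compact topological space and let K : X×X → [0,+∞] be lower semicontinuous with K(·,ζ) not identically zero for each ζ∈X. Then for every compact set F⊆X one has C_K(F) < ∞. -/

import Mathlib

open MeasureTheory Set
open scoped ENNReal

noncomputable section

/-- Capacity of `F` with respect to the kernel `K`: supremum of total masses of
nonnegative Radon measures supported in `F` whose `K`-potential is `≤ 1` on `X`. -/
def genCapac {X : Type*} [TopologicalSpace X] [MeasurableSpace X]
    (K : X → X → ℝ≥0∞) (F : Set X) : ℝ≥0∞ :=
  ⨆ (μ : Measure X) (_ : μ.InnerRegular ∧ IsLocallyFiniteMeasure μ ∧ μ Fᶜ = 0 ∧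
      ∀ z : X, ∫⁻ ζ, K z ζ ∂μ ≤ 1), μ F

/-- Fuglede's property (i): the capacity of a compact set with respect to a lower
semicontinuous kernel `K` with `K(·,ζ) ≢ 0` is finite. -/
theorem stmt15 {X : Type*} [TopologicalSpace X] [T2Space X] [LocallyCompactSpace X]
    [MeasurableSpace X] [BorelSpace X]
    (K : X → X → ℝ≥0∞) (hK : LowerSemicontinuous fun p : X × X => K p.1 p.2)
    (hKnz : ∀ ζ : X, ∃ z : X, K z ζ ≠ 0)
    (F : Set X) (hF : IsCompact F) :
    genCapac K F < ⊤ := by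
  have hzc : ∀ ζ : X, ∃ z : X, ∃ cc : ℝ≥0∞, 0 < cc ∧ cc < K z ζ := by
    intro ζ
    obtain ⟨z, hz⟩ := hKnz ζ
    obtain ⟨cc, hc0, hcK⟩ := exists_between (pos_iff_ne_zero.mpr hz)
    exact ⟨z, cc, hc0, hcK⟩
  choose z c hc0 hcK using hzc
  have hlsc : ∀ zz : X, LowerSemicontinuous (fun ζ' => K zz ζ') := fun zz =>
    LowerSemicontinuous.comp (f := fun p : X × X => K p.1 p.2) hK (Continuous.prodMk_right zz)
  set U : X → Set X := fun ζ => {ζ' | c ζ < K (z ζ) ζ'} with hUdef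
  have hUopen : ∀ ζ, IsOpen (U ζ) := fun ζ => (hlsc (z ζ)).isOpen_preimage (c ζ)
  have hmemU : ∀ ζ ∈ F, U ζ ∈ nhds ζ := fun ζ _ => (hUopen ζ).mem_nhds (hcK ζ)
  obtain ⟨t, -, hcover⟩ := hF.elim_nhds_subcover U hmemU
  have hsum : (∑ ζ ∈ t, (c ζ)⁻¹) < ⊤ := by
    exact ENNReal.sum_lt_top.mpr fun ζ _ => ENNReal.inv_lt_top.mpr (hc0 ζ)
  refine lt_of_le_of_lt ?_ hsum
  refine iSup₂_le fun μ hμ => ?_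
  obtain ⟨-, -, -, hpot⟩ := hμ
  calc μ F ≤ μ (⋃ ζ ∈ t, U ζ) := measure_mono hcover
    _ ≤ ∑ ζ ∈ t, μ (U ζ) := measure_biUnion_finset_le t _
    _ ≤ ∑ ζ ∈ t, (c ζ)⁻¹ := by
        refine Finset.sum_le_sum fun ζ _ => ?_
        have hmeas : MeasurableSet (U ζ) := (hUopen ζ).measurableSet
        have h1 : c ζ * μ (U ζ) ≤ ∫⁻ ζ' in U ζ, K (z ζ) ζ' ∂μ := by
          rw [← setLIntegral_const]
          exact setLIntegral_mono' hmeas fun x hx => le_of_lt hx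
        have h2 : (∫⁻ ζ' in U ζ, K (z ζ) ζ' ∂μ) ≤ 1 :=
          (setLIntegral_le_lintegral _ _).trans (hpot (z ζ))
        rw [ENNReal.le_inv_iff_mul_le, mul_comm]
        exact h1.trans h2

end
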